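/- arXiv:1511.08139 — 2 statements merged into one kernel-verified Lean document; each statement's English description precedes it below -/
import Mathlib

section
/- Let (G,N) be a pair of finite groups and K a normal subgroup of G contained in N. Then (the index of [K,_cG] in K ∩ [N,_cG]) · |M^{(c)}(G,N)| = |M^{(c)}(G/K, N/K)| · |M^{(c)}(G,K)|. -/
open Subgroup
open scoped Pointwise

/-- `itComm X Y c` is the `c`-fold iterated commutator subgroup
`[X,_c Y] = ⁅…⁅⁅X,Y⁆,Y⁆,…,Y⁆` (with `c` copies of `Y`); `itComm X Y 0 = X`. -/
def itComm {P : Type*} [Group P] (X Y : Subgroup P) : ℕ → Subgroup P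
  | 0 => X
  | c + 1 => ⁅itComm X Y c, Y⁆

instance itComm_normal {P : Type*} [Group P] (X Y : Subgroup P) [hX : X.Normal] [hY : Y.Normal]
    (c : ℕ) : (itComm X Y c).Normal := by
  induction c with
  | zero => exact hX
  | succ c ih => exact Subgroup.commutator_normal _ _

/-- The abelianization of a group, written additively. -/
abbrev AbOf (A : Type) [Group A] : Type := Additive (Abelianization A)

/-- Iterated tensor product `M ⊗ B ⊗ ⋯ ⊗ B` (with `c` factors `B`) of `ℤ`-modules. -/
noncomputable def iterTensor (M B : ModuleCat ℤ) : ℕ → ModuleCat ℤ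
  | 0 => M
  | c + 1 => ModuleCat.of ℤ (TensorProduct ℤ (iterTensor M B c) B)

/-- `⊗^{c+1}(A, B) = A^{ab} ⊗_ℤ B^{ab} ⊗_ℤ ⋯ ⊗_ℤ B^{ab}` with `c` factors `B^{ab}`. -/
noncomputable def tensorPair (A B : Type) [Group A] [Group B] (c : ℕ) : ModuleCat ℤ :=
  iterTensor (ModuleCat.of ℤ (AbOf A)) (ModuleCat.of ℤ (AbOf B)) c

/-- `M^{(c)}(G,N) = (R ∩ [S,_c F]) / [R,_c F]`, where `R = ker π` and `S = π⁻¹(N)`,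
relative to the free presentation `π : F ↠ G`. -/
def McPair {F G : Type} [Group F] [Group G] (π : F →* G) (N : Subgroup G) (c : ℕ) : Type :=
  (π.ker ⊓ itComm (N.comap π) ⊤ c : Subgroup F) ⧸
    (itComm π.ker ⊤ c).subgroupOf (π.ker ⊓ itComm (N.comap π) ⊤ c)

noncomputable instance {F G : Type} [Group F] [Group G] (π : F →* G) (N : Subgroup G) (c : ℕ) :
    Group (McPair π N c) :=
  inferInstanceAs (Group ((π.ker ⊓ itComm (N.comap π) ⊤ c : Subgroup F) ⧸
    (itComm π.ker ⊤ c).subgroupOf (π.ker ⊓ itComm (N.comap π) ⊤ c)))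

/-- `M^{(c)}(G/K, N/K) = (T ∩ [S,_c F]) / [T,_c F]`, where `T = π⁻¹(K)` and `S = π⁻¹(N)`,
relative to the free presentation `π : F ↠ G`. -/
def McPairQuot {F G : Type} [Group F] [Group G] (π : F →* G) (N K : Subgroup G) (c : ℕ) :
    Type :=
  (K.comap π ⊓ itComm (N.comap π) ⊤ c : Subgroup F) ⧸
    (itComm (K.comap π) ⊤ c).subgroupOf (K.comap π ⊓ itComm (N.comap π) ⊤ c)

noncomputable instance {F G : Type} [Group F] [Group G] (π : F →* G) (N K : Subgroup G)
    [K.Normal] (c : ℕ) : Group (McPairQuot π N K c) :=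
  inferInstanceAs (Group ((K.comap π ⊓ itComm (N.comap π) ⊤ c : Subgroup F) ⧸
    (itComm (K.comap π) ⊤ c).subgroupOf (K.comap π ⊓ itComm (N.comap π) ⊤ c)))

/-- `M^{(c)}(G,K) = (R ∩ [T,_c F]) / [R,_c F]`, where `R = ker π` and `T = π⁻¹(K)`,
relative to the free presentation `π : F ↠ G`. -/
def McPairSub {F G : Type} [Group F] [Group G] (π : F →* G) (K : Subgroup G) (c : ℕ) : Type :=
  (π.ker ⊓ itComm (K.comap π) ⊤ c : Subgroup F) ⧸
    (itComm π.ker ⊤ c).subgroupOf (π.ker ⊓ itComm (K.comap π) ⊤ c)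


lemma itComm_mono {P : Type*} [Group P] {X Y : Subgroup P} (h : X ≤ Y) (Z : Subgroup P) :
    ∀ c, itComm X Z c ≤ itComm Y Z c
  | 0 => h
  | c + 1 => Subgroup.commutator_mono (itComm_mono h Z c) le_rfl

lemma itComm_le_self {P : Type*} [Group P] (X : Subgroup P) [X.Normal] :
    ∀ c, itComm X ⊤ c ≤ X
  | 0 => le_rfl
  | c + 1 => le_trans (Subgroup.commutator_le_left _ _) (itComm_le_self X c)

lemma map_itComm {F G : Type} [Group F] [Group G] (π : F →* G) (hπ : Function.Surjective π)
    (X : Subgroup F) : ∀ c, Subgroup.map π (itComm X ⊤ c) = itComm (Subgroup.map π X) ⊤ c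
  | 0 => rfl
  | c + 1 => by
    show Subgroup.map π ⁅itComm X ⊤ c, ⊤⁆ = ⁅itComm (Subgroup.map π X) ⊤ c, ⊤⁆
    rw [Subgroup.map_commutator, map_itComm π hπ X c, Subgroup.map_top_of_surjective π hπ]

/-- Let `(G,N)` be a pair of finite groups, `K` a normal subgroup of `G` contained in `N`, and
`π : F ↠ G` a free presentation.  Then
`[K ∩ [N,_c G] : [K,_c G]] · |M^{(c)}(G,N)| = |M^{(c)}(G/K, N/K)| · |M^{(c)}(G,K)|`. -/
theorem card_multiplier_eq_of_normal {G : Type} [Group G] [Finite G]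
    {F : Type} [Group F] [IsFreeGroup F] (π : F →* G) (hπ : Function.Surjective π)
    (N K : Subgroup G) [N.Normal] [K.Normal] (hKN : K ≤ N) (c : ℕ) (hc : 1 ≤ c) :
    (itComm K ⊤ c).relIndex (K ⊓ itComm N ⊤ c) * Nat.card (McPair π N c) =
      Nat.card (McPairQuot π N K c) * Nat.card (McPairSub π K c) := by
  classical
  haveI : (K.comap π).Normal := ‹K.Normal›.comap π
  haveI : (N.comap π).Normal := ‹N.Normal›.comap π
  set R := π.ker with hRdef
  set T := K.comap π with hTdef
  set S := N.comap π with hSdef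
  set Rc := itComm R ⊤ c with hRc
  set Tc := itComm T ⊤ c with hTc
  set Sc := itComm S ⊤ c with hSc
  have hRT : R ≤ T := fun x hx => by
    have h1 : π x = 1 := hx
    exact Subgroup.mem_comap.mpr (by rw [h1]; exact K.one_mem)
  have hTS : T ≤ S := Subgroup.comap_mono hKN
  have hmapT : Subgroup.map π T = K := Subgroup.map_comap_eq_self_of_surjective hπ K
  have hmapS : Subgroup.map π S = N := Subgroup.map_comap_eq_self_of_surjective hπ N
  have hmapTc : Subgroup.map π Tc = itComm K ⊤ c := by
    rw [hTc, map_itComm π hπ, hmapT]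
  have hmapSc : Subgroup.map π Sc = itComm N ⊤ c := by
    rw [hSc, map_itComm π hπ, hmapS]
  have hTcT : Tc ≤ T := itComm_le_self T c
  have hTcSc : Tc ≤ Sc := itComm_mono hTS ⊤ c
  have hRcR : Rc ≤ R := itComm_le_self R c
  have hRcTc : Rc ≤ Tc := itComm_mono hRT ⊤ c
  set A := T ⊓ Sc with hA
  set B := R ⊓ Sc with hB
  set M := Tc ⊔ B with hM
  have hTcA : Tc ≤ A := le_inf hTcT hTcSc
  have hBA : B ≤ A := inf_le_inf_right Sc hRT
  have hMA : M ≤ A := sup_le hTcA hBA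
  -- identify the three multiplier cardinalities as relative indices
  have e1 : Nat.card (McPair π N c) = Rc.relIndex B := rfl
  have e2 : Nat.card (McPairQuot π N K c) = Tc.relIndex A := rfl
  have e3 : Nat.card (McPairSub π K c) = Rc.relIndex (R ⊓ Tc) := rfl
  set x := (itComm K ⊤ c).relIndex (K ⊓ itComm N ⊤ c) with hx
  set y := (R ⊓ Tc).relIndex B with hy
  set z := Rc.relIndex (R ⊓ Tc) with hz
  -- McPair splits as z * y
  have hsplit1 : Rc.relIndex B = z * y := by
    rw [hz, hy, Subgroup.relIndex_mul_relIndex Rc (R ⊓ Tc) B (le_inf hRcR hRcTc)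
      (inf_le_inf_left R hTcSc)]
  -- Tc.relIndex M = y
  have hTcB : Tc ⊓ B = R ⊓ Tc := by
    apply le_antisymm
    · exact le_inf (inf_le_right.trans inf_le_left) inf_le_left
    · exact le_inf inf_le_right (le_inf inf_le_left (inf_le_right.trans hTcSc))
  have hTcM : Tc.relIndex M = y := by
    rw [hM, sup_comm, Subgroup.relIndex_sup_right, ← Subgroup.inf_relIndex_right, hTcB, hy]
  -- M.relIndex A = x
  have hmapA : Subgroup.map π A = K ⊓ itComm N ⊤ c := by
    apply le_antisymm
    · refine le_inf ?_ ?_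
      · exact (Subgroup.map_mono inf_le_left).trans (le_of_eq hmapT)
      · exact (Subgroup.map_mono inf_le_right).trans (le_of_eq hmapSc)
    · intro g hg
      rw [Subgroup.mem_inf] at hg
      have : g ∈ Subgroup.map π Sc := by rw [hmapSc]; exact hg.2
      obtain ⟨s, hs, rfl⟩ := this
      exact ⟨s, Subgroup.mem_inf.mpr ⟨hg.1, hs⟩, rfl⟩
  have hcomap : (itComm K ⊤ c).comap π = Tc ⊔ R := by
    rw [← hmapTc, Subgroup.comap_map_eq, hRdef]
  have hMeq : (Tc ⊔ R) ⊓ A = M := by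
    apply le_antisymm
    · intro w hw
      rw [Subgroup.mem_inf] at hw
      obtain ⟨hw1, hw2⟩ := hw
      have hw1' : w ∈ ((Tc : Set F) * (R : Set F)) := by
        rw [← Subgroup.mul_normal Tc R]
        exact hw1
      obtain ⟨t, ht, r, hr, rfl⟩ := hw1'
      have htS : t ∈ Sc := hTcSc ht
      have hrS : r ∈ Sc := by
        have h2 : t * r ∈ Sc := (Subgroup.mem_inf.mp hw2).2
        have := Sc.mul_mem (Sc.inv_mem htS) h2
        simpa [mul_assoc] using this
      exact Subgroup.mul_mem _ (Subgroup.mem_sup_left ht)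
        (Subgroup.mem_sup_right (Subgroup.mem_inf.mpr ⟨hr, hrS⟩))
    · exact le_inf (sup_le le_sup_left (inf_le_left.trans le_sup_right)) hMA
  have hMx : M.relIndex A = x := by
    rw [hx, ← hmapA, ← Subgroup.relIndex_comap, hcomap,
      ← Subgroup.inf_relIndex_right (Tc ⊔ R) A, hMeq]
  -- McPairQuot splits as y * x
  have hsplit2 : Tc.relIndex A = y * x := by
    rw [← Subgroup.relIndex_mul_relIndex Tc M A le_sup_left hMA, hTcM, hMx]
  rw [e1, e2, e3, hsplit1, hsplit2]
  ring
end

section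
/- Let G be a group with free presentation F/R (F a free group, π : F → G surjective with kernel R), let B be a normal subgroup of G, and let S = π⁻¹(B). Then for every integer c ≥ 1 the quotient [S,_cF] / ([R,_cF]·[S,_{c+1}F]·∏_{i=2}^{c+1} γ_{c+1}(S,F)_i) is abelian, and there exists a surjective homomorphism from ⊗^{c+1}(B, G/B) onto this quotient. -/
open Subgroup

/-- `gammaMixed T c i` is the left-normed multiple commutator subgroup
`γ_{c+1}(T,F)_i = [D_1,D_2,…,D_{c+1}]` with `D_1 = D_i = T` and `D_j = F` (i.e. `⊤`)
for `j ≠ 1, i`. -/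
def gammaMixed {P : Type*} [Group P] (T : Subgroup P) (c i : ℕ) : Subgroup P :=
  (List.range c).foldl (fun A j => ⁅A, if j + 2 = i then T else ⊤⁆) T

private theorem foldl_comm_normal {P : Type*} [Group P] (T : Subgroup P) [hT : T.Normal]
    (i : ℕ) : ∀ (L : List ℕ) (A : Subgroup P), A.Normal →
      (L.foldl (fun A j => ⁅A, if j + 2 = i then T else ⊤⁆) A).Normal := by
  intro L
  induction L with
  | nil => intro A hA; exact hA
  | cons a L ih =>
      intro A hA
      apply ih
      haveI := hA
      by_cases h : a + 2 = i
      · simpa [h] using (inferInstance : (⁅A, T⁆).Normal)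
      · simpa [h] using (inferInstance : (⁅A, (⊤ : Subgroup P)⁆).Normal)

instance gammaMixed_normal {P : Type*} [Group P] (T : Subgroup P) [hT : T.Normal] (c i : ℕ) :
    (gammaMixed T c i).Normal :=
  foldl_comm_normal T i (List.range c) T hT

instance finsetSup_gammaMixed_normal {P : Type*} [Group P] (T : Subgroup P) [T.Normal]
    (c : ℕ) (s : Finset ℕ) : (s.sup (gammaMixed T c)).Normal := by
  induction s using Finset.cons_induction with
  | empty => simpa [Finset.sup_empty] using (inferInstance : (⊥ : Subgroup P).Normal)
  | cons a s ha ih =>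
      rw [Finset.sup_cons]
      haveI := ih
      exact Subgroup.sup_normal _ _


-- auxiliary lemmas for the main theorem
open scoped commutatorElement

section Prelim
open Subgroup

lemma itComm_shift {P : Type*} [Group P] (X Y : Subgroup P) :
    ∀ n, itComm ⁅X, Y⁆ Y n = itComm X Y (n + 1)
  | 0 => rfl
  | n + 1 => by
      show ⁅itComm ⁅X, Y⁆ Y n, Y⁆ = ⁅itComm X Y (n+1), Y⁆
      rw [itComm_shift X Y n]

lemma itComm_add {P : Type*} [Group P] (X Y : Subgroup P) (a : ℕ) :
    ∀ b, itComm (itComm X Y a) Y b = itComm X Y (a + b)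
  | 0 => rfl
  | b + 1 => by
      show ⁅itComm (itComm X Y a) Y b, Y⁆ = itComm X Y (a + (b+1))
      rw [itComm_add X Y a b]; rfl

lemma commutator_top_le_self {P : Type*} [Group P] (X : Subgroup P) [hX : X.Normal] :
    ⁅X, (⊤ : Subgroup P)⁆ ≤ X := by
  rw [Subgroup.commutator_le]
  intro g₁ h₁ g₂ _
  have : g₁ * (g₂ * g₁⁻¹ * g₂⁻¹) ∈ X := X.mul_mem h₁ (by simpa using hX.conj_mem _ (X.inv_mem h₁) g₂)
  simpa [commutatorElement_def, mul_assoc] using this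

lemma itComm_top_succ_le {P : Type*} [Group P] (X : Subgroup P) [X.Normal] (n : ℕ) :
    itComm X ⊤ (n + 1) ≤ itComm X ⊤ n :=
  commutator_top_le_self (itComm X ⊤ n)

lemma itComm_top_antitone {P : Type*} [Group P] (X : Subgroup P) [X.Normal] :
    ∀ {m n : ℕ}, m ≤ n → itComm X ⊤ n ≤ itComm X ⊤ m := by
  intro m n h
  induction h with
  | refl => exact le_rfl
  | step h ih => exact le_trans (itComm_top_succ_le X _) ih

def lcom {P : Type*} [Group P] : P → List P → P
  | x, [] => x
  | x, f :: l => lcom ⁅x, f⁆ l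

lemma lcom_mem {P : Type*} [Group P] : ∀ (l : List P) {K : Subgroup P} {x : P}, x ∈ K →
    lcom x l ∈ itComm K ⊤ l.length
  | [], _, _, h => h
  | f :: l, K, x, h => by
      show lcom ⁅x, f⁆ l ∈ itComm K ⊤ (l.length + 1)
      rw [← itComm_shift]
      exact lcom_mem l (Subgroup.commutator_mem_commutator h (Subgroup.mem_top f))

lemma lcom_one {P : Type*} [Group P] : ∀ (l : List P), lcom (1 : P) l = 1
  | [] => rfl
  | f :: l => by show lcom ⁅(1:P), f⁆ l = 1; rw [commutatorElement_def]; simpa using lcom_one l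

lemma lcom_append {P : Type*} [Group P] :
    ∀ (l₁ l₂ : List P) (x : P), lcom x (l₁ ++ l₂) = lcom (lcom x l₁) l₂
  | [], _, _ => rfl
  | f :: l₁, l₂, x => by
      show lcom ⁅x, f⁆ (l₁ ++ l₂) = _
      rw [lcom_append l₁ l₂ ⁅x, f⁆]; rfl

lemma foldl_no_hit {P : Type*} [Group P] (T : Subgroup P) (i : ℕ) :
    ∀ (L : List ℕ), (∀ j ∈ L, j + 2 ≠ i) → ∀ A : Subgroup P,
      L.foldl (fun A j => ⁅A, if j + 2 = i then T else ⊤⁆) A = itComm A ⊤ L.length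
  | [], _, _ => rfl
  | j :: L, h, A => by
      have hj : j + 2 ≠ i := h j (List.mem_cons_self (a := j) (l := L))
      show L.foldl _ ⁅A, if j + 2 = i then T else ⊤⁆ = _
      rw [if_neg hj, foldl_no_hit T i L (fun x hx => h x (List.mem_cons_of_mem j hx)),
        itComm_shift]
      rfl

lemma gammaMixed_eq {P : Type*} [Group P] (T : Subgroup P) (a b : ℕ) :
    gammaMixed T (a + 1 + b) (a + 2) = itComm ⁅itComm T ⊤ a, T⁆ ⊤ b := by
  unfold gammaMixed
  rw [List.range_add, List.foldl_append, List.range_succ, List.foldl_append]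
  rw [foldl_no_hit T (a+2) (List.range a) (fun j hj => by
    have := List.mem_range.mp hj; omega)]
  rw [List.length_range]
  show (List.map _ (List.range b)).foldl _ ⁅itComm T ⊤ a, if a + 2 = a + 2 then T else ⊤⁆ = _
  rw [if_pos rfl]
  rw [foldl_no_hit T (a+2) _ (fun j hj => by
    obtain ⟨j', hj', rfl⟩ := List.mem_map.mp hj; omega)]
  rw [List.length_map, List.length_range]

end Prelim

section KeyLemmas
open Subgroup
variable {P : Type*} [Group P] (S N : Subgroup P) [S.Normal] [N.Normal] (c : ℕ)

lemma mkN_eq_one {z : P} (hz : z ∈ N) : QuotientGroup.mk' N z = 1 := by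
  rw [← MonoidHom.mem_ker, QuotientGroup.ker_mk']; exact hz

omit [S.Normal] in
lemma mkN_comm (hc1 : itComm S ⊤ (c + 1) ≤ N) {u : P} (hu : u ∈ itComm S ⊤ c) (z : P) :
    QuotientGroup.mk' N u * QuotientGroup.mk' N z
      = QuotientGroup.mk' N z * QuotientGroup.mk' N u := by
  have h1 : QuotientGroup.mk' N ⁅u, z⁆ = 1 :=
    mkN_eq_one N (hc1 (Subgroup.commutator_mem_commutator hu (Subgroup.mem_top z)))
  rw [map_commutatorElement] at h1
  exact (commutatorElement_eq_one_iff_commute.mp h1).eq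

theorem key (hc1 : itComm S ⊤ (c + 1) ≤ N) :
    ∀ (l : List P) (k : ℕ), c ≤ k + l.length →
      (∀ x y, x ∈ itComm S ⊤ k → y ∈ itComm S ⊤ k →
        QuotientGroup.mk' N (lcom (x * y) l)
          = QuotientGroup.mk' N (lcom x l) * QuotientGroup.mk' N (lcom y l)) ∧
      (∀ x, x ∈ itComm S ⊤ k → ∀ a : P,
        QuotientGroup.mk' N (lcom (a * x * a⁻¹) l) = QuotientGroup.mk' N (lcom x l))
  | [], k, hk => by
      constructor
      · intro x y _ _; exact map_mul _ x y
      · intro x hx a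
        show QuotientGroup.mk' N (a * x * a⁻¹) = QuotientGroup.mk' N x
        have h0 : a * x * a⁻¹ = ⁅a, x⁆ * x := by group
        rw [h0, map_mul, mkN_eq_one N, one_mul]
        apply hc1
        apply itComm_top_antitone S (show c + 1 ≤ k + 1 by
          simp at hk; omega)
        have : ⁅a, x⁆ ∈ ⁅(⊤ : Subgroup P), itComm S ⊤ k⁆ :=
          Subgroup.commutator_mem_commutator (Subgroup.mem_top a) hx
        rwa [Subgroup.commutator_comm] at this
  | f :: l, k, hk => by
      have hk' : c ≤ (k + 1) + l.length := by simp at hk; omega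
      obtain ⟨IHmul, IHconj⟩ := key hc1 l (k + 1) hk'
      have Hmul : ∀ x y, x ∈ itComm S ⊤ k → y ∈ itComm S ⊤ k →
          QuotientGroup.mk' N (lcom (x * y) (f :: l))
            = QuotientGroup.mk' N (lcom x (f :: l)) * QuotientGroup.mk' N (lcom y (f :: l)) := by
        intro x y hx hy
        have hsplit : ⁅x * y, f⁆ = (x * ⁅y, f⁆ * x⁻¹) * ⁅x, f⁆ := by
          simp only [commutatorElement_def]; group
        have hyf : ⁅y, f⁆ ∈ itComm S ⊤ (k + 1) :=
          Subgroup.commutator_mem_commutator hy (Subgroup.mem_top f)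
        have hxf : ⁅x, f⁆ ∈ itComm S ⊤ (k + 1) :=
          Subgroup.commutator_mem_commutator hx (Subgroup.mem_top f)
        have hconjmem : x * ⁅y, f⁆ * x⁻¹ ∈ itComm S ⊤ (k + 1) :=
          (itComm_normal S ⊤ (k+1)).conj_mem _ hyf x
        show QuotientGroup.mk' N (lcom ⁅x * y, f⁆ l) = _
        rw [hsplit, IHmul _ _ hconjmem hxf, IHconj _ hyf x]
        have hmem : lcom ⁅y, f⁆ l ∈ itComm S ⊤ c := by
          apply itComm_top_antitone S (show c ≤ (k+1) + l.length from hk')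
          rw [← itComm_add S ⊤ (k+1) l.length]
          exact lcom_mem l hyf
        exact mkN_comm S N c hc1 hmem _
      refine ⟨Hmul, ?_⟩
      intro x hx a
      have hax : ⁅a, x⁆ ∈ itComm S ⊤ k := by
        apply itComm_top_antitone S (Nat.le_succ k)
        have : ⁅a, x⁆ ∈ ⁅(⊤ : Subgroup P), itComm S ⊤ k⁆ :=
          Subgroup.commutator_mem_commutator (Subgroup.mem_top a) hx
        rwa [Subgroup.commutator_comm] at this
      have h1 : a * x * a⁻¹ = ⁅a, x⁆ * x := by group
      rw [h1, Hmul _ _ hax hx]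
      have h2 : QuotientGroup.mk' N (lcom ⁅a, x⁆ (f :: l)) = 1 := by
        apply mkN_eq_one
        apply hc1
        apply itComm_top_antitone S (show c + 1 ≤ (k + 1) + (f :: l).length by
          simp; omega)
        have hmem : ⁅a, x⁆ ∈ itComm S ⊤ (k + 1) := by
          have : ⁅a, x⁆ ∈ ⁅(⊤ : Subgroup P), itComm S ⊤ k⁆ :=
            Subgroup.commutator_mem_commutator (Subgroup.mem_top a) hx
          rwa [Subgroup.commutator_comm] at this
        have := lcom_mem (f :: l) hmem
        rwa [itComm_add] at this
      rw [h2, one_mul]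

theorem key2 (hc1 : itComm S ⊤ (c + 1) ≤ N)
    (hgam : ∀ k, k + 1 ≤ c → itComm ⁅itComm S ⊤ k, S⁆ ⊤ (c - (k + 1)) ≤ N)
    (l : List P) (k : ℕ) (hlen : k + 1 + l.length = c) {u : P} (hu : u ∈ itComm S ⊤ k) :
    (∀ f g : P, QuotientGroup.mk' N (lcom u ((f * g) :: l))
      = QuotientGroup.mk' N (lcom u (f :: l)) * QuotientGroup.mk' N (lcom u (g :: l))) ∧
    (∀ t ∈ S, ∀ f : P, QuotientGroup.mk' N (lcom u ((t * f) :: l))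
      = QuotientGroup.mk' N (lcom u (f :: l))) := by
  have hk' : c ≤ (k + 1) + l.length := by omega
  obtain ⟨IHmul, IHconj⟩ := key S N c hc1 l (k + 1) hk'
  constructor
  · intro f g
    have hsplit : ⁅u, f * g⁆ = ⁅u, f⁆ * (f * ⁅u, g⁆ * f⁻¹) := by
      simp only [commutatorElement_def]; group
    have huf : ⁅u, f⁆ ∈ itComm S ⊤ (k + 1) :=
      Subgroup.commutator_mem_commutator hu (Subgroup.mem_top f)
    have hug : ⁅u, g⁆ ∈ itComm S ⊤ (k + 1) :=
      Subgroup.commutator_mem_commutator hu (Subgroup.mem_top g)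
    have hconjmem : f * ⁅u, g⁆ * f⁻¹ ∈ itComm S ⊤ (k + 1) :=
      (itComm_normal S ⊤ (k+1)).conj_mem _ hug f
    show QuotientGroup.mk' N (lcom ⁅u, f * g⁆ l) = _
    rw [hsplit, IHmul _ _ huf hconjmem, IHconj _ hug f]
    rfl
  · intro t ht f
    have hsplit : ⁅u, t * f⁆ = ⁅u, t⁆ * (t * ⁅u, f⁆ * t⁻¹) := by
      simp only [commutatorElement_def]; group
    have hut : ⁅u, t⁆ ∈ ⁅itComm S ⊤ k, S⁆ :=
      Subgroup.commutator_mem_commutator hu ht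
    have hut' : ⁅u, t⁆ ∈ itComm S ⊤ (k + 1) :=
      Subgroup.commutator_mono le_rfl le_top hut
    have huf : ⁅u, f⁆ ∈ itComm S ⊤ (k + 1) :=
      Subgroup.commutator_mem_commutator hu (Subgroup.mem_top f)
    have hconjmem : t * ⁅u, f⁆ * t⁻¹ ∈ itComm S ⊤ (k + 1) :=
      (itComm_normal S ⊤ (k+1)).conj_mem _ huf t
    show QuotientGroup.mk' N (lcom ⁅u, t * f⁆ l) = _
    rw [hsplit, IHmul _ _ hut' hconjmem, IHconj _ huf t]
    have h0 : QuotientGroup.mk' N (lcom ⁅u, t⁆ l) = 1 := by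
      apply mkN_eq_one
      apply hgam k (by omega)
      have hm : lcom ⁅u, t⁆ l ∈ itComm ⁅itComm S ⊤ k, S⁆ ⊤ l.length := lcom_mem l hut
      have heq : c - (k + 1) = l.length := by omega
      rwa [heq]
    rw [h0, one_mul]
    rfl

theorem key_subst (hc1 : itComm S ⊤ (c + 1) ≤ N)
    (hgam : ∀ k, k + 1 ≤ c → itComm ⁅itComm S ⊤ k, S⁆ ⊤ (c - (k + 1)) ≤ N) :
    ∀ {l l' : List P}, List.Forall₂ (fun f f' => f' * f⁻¹ ∈ S) l l' →
      ∀ k, k + l.length = c → ∀ {u : P}, u ∈ itComm S ⊤ k →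
        QuotientGroup.mk' N (lcom u l') = QuotientGroup.mk' N (lcom u l) := by
  intro l l' hll'
  induction hll' with
  | nil => intro k _ u _; rfl
  | @cons f f' l₂ l₂' hf htail ih =>
      intro k hk u hu
      have hlen2 : l₂'.length = l₂.length := htail.length_eq.symm
      have hf' : f' = (f' * f⁻¹) * f := by group
      have hkey2 := key2 S N c hc1 hgam l₂' k (by simp at hk; omega) hu
      show QuotientGroup.mk' N (lcom u (f' :: l₂')) = _
      rw [hf']
      rw [hkey2.2 (f' * f⁻¹) hf f]
      show QuotientGroup.mk' N (lcom ⁅u, f⁆ l₂') = _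
      have huf : ⁅u, f⁆ ∈ itComm S ⊤ (k + 1) :=
        Subgroup.commutator_mem_commutator hu (Subgroup.mem_top f)
      exact ih (k + 1) (by simp at hk; omega) huf

end KeyLemmas

section TensorAux
open Subgroup

lemma ab_of_surjective (G : Type*) [Group G] :
    Function.Surjective (Abelianization.of : G → Abelianization G) :=
  QuotientGroup.mk'_surjective _

private lemma abOf_cases {Gq : Type*} [Group Gq] (a : Additive (Abelianization Gq)) :
    ∃ g : Gq, a = Additive.ofMul (Abelianization.of g) := by
  obtain ⟨g, hg⟩ := ab_of_surjective Gq (Additive.toMul a)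
  exact ⟨g, by rw [hg]; rfl⟩

private lemma addHom_map_intSMul {M N : Type*} [AddCommGroup M] [AddCommGroup N]
    [iM : Module ℤ M] [iN : Module ℤ N] (f : M →+ N) (z : ℤ) (x : M) : f (z • x) = z • f x := by
  have h1 : iM = AddCommGroup.toIntModule M :=
    @Subsingleton.elim _ (@Unique.instSubsingleton _ AddCommGroup.uniqueIntModule) _ _
  have h2 : iN = AddCommGroup.toIntModule N :=
    @Subsingleton.elim _ (@Unique.instSubsingleton _ AddCommGroup.uniqueIntModule) _ _
  subst h1; subst h2
  exact map_zsmul f z x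

private noncomputable def abHom {Gq : Type} [Group Gq] {X : Type} [AddCommGroup X]
    (f : Gq → X) (hf : ∀ g g', f (g * g') = f g + f g') : AbOf Gq →+ X :=
  (Abelianization.lift (MonoidHom.mk' (fun g => Multiplicative.ofAdd (f g))
    (fun g g' => by show Multiplicative.ofAdd (f (g * g')) = _; rw [hf g g']; rfl))).toAdditiveLeft

private lemma abHom_apply {Gq : Type} [Group Gq] {X : Type} [AddCommGroup X]
    (f : Gq → X) (hf : ∀ g g', f (g * g') = f g + f g') (g : Gq) :
    abHom f hf (Additive.ofMul (Abelianization.of g)) = f g := by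
  simp [abHom, MonoidHom.toAdditiveLeft]

theorem tensor_surj_aux (Bg Gq : Type) [Group Bg] [Group Gq] :
    ∀ (c : ℕ) (X : Type) [AddCommGroup X] (w : Bg → List Gq → X),
      (∀ b b' v, v.length = c → w (b * b') v = w b v + w b' v) →
      (∀ b (g g' : Gq) v₁ v₂, v₁.length + v₂.length + 1 = c →
        w b (v₁ ++ (g * g') :: v₂) = w b (v₁ ++ g :: v₂) + w b (v₁ ++ g' :: v₂)) →
      ∃ L : tensorPair Bg Gq c →+ X,
        ∀ b v, v.length = c → ∃ t, L t = w b v := by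
  intro c
  induction c with
  | zero =>
      intro X _ w Hhead _
      refine ⟨abHom (fun b => w b []) (fun b b' => Hhead b b' [] rfl), ?_⟩
      rintro b v hv
      rw [List.length_eq_zero_iff] at hv
      subst hv
      exact ⟨Additive.ofMul (Abelianization.of b), abHom_apply _ _ b⟩
  | succ c ih =>
      intro X _ w Hhead Hslot
      classical
      set w' : Bg → List Gq → (AbOf Gq →+ X) := fun b v =>
        if h : v.length = c then
          abHom (fun g => w b (v ++ [g]))
            (fun g g' => Hslot b g g' v [] (by simp [h])) else 0 with hw'
      have hw'eval : ∀ b v (h : v.length = c) (g : Gq),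
          w' b v (Additive.ofMul (Abelianization.of g)) = w b (v ++ [g]) := by
        intro b v h g
        rw [hw']
        simp only [dif_pos h]
        exact abHom_apply _ _ g
      have Hhead' : ∀ b b' v, v.length = c → w' (b * b') v = w' b v + w' b' v := by
        intro b b' v hv
        apply AddMonoidHom.ext
        intro a
        obtain ⟨g, rfl⟩ := abOf_cases a
        rw [AddMonoidHom.add_apply, hw'eval _ _ hv, hw'eval _ _ hv, hw'eval _ _ hv]
        exact Hhead b b' (v ++ [g]) (by simp [hv])
      have Hslot' : ∀ b (g g' : Gq) v₁ v₂, v₁.length + v₂.length + 1 = c →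
          w' b (v₁ ++ (g * g') :: v₂) = w' b (v₁ ++ g :: v₂) + w' b (v₁ ++ g' :: v₂) := by
        intro b g g' v₁ v₂ hlen
        apply AddMonoidHom.ext
        intro a
        obtain ⟨h, rfl⟩ := abOf_cases a
        have l1 : (v₁ ++ (g * g') :: v₂).length = c := by simp; omega
        have l2 : (v₁ ++ g :: v₂).length = c := by simp; omega
        have l3 : (v₁ ++ g' :: v₂).length = c := by simp; omega
        rw [AddMonoidHom.add_apply, hw'eval _ _ l1, hw'eval _ _ l2, hw'eval _ _ l3]
        have e1 : (v₁ ++ (g * g') :: v₂) ++ [h] = v₁ ++ (g * g') :: (v₂ ++ [h]) := by simp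
        have e2 : (v₁ ++ g :: v₂) ++ [h] = v₁ ++ g :: (v₂ ++ [h]) := by simp
        have e3 : (v₁ ++ g' :: v₂) ++ [h] = v₁ ++ g' :: (v₂ ++ [h]) := by simp
        rw [e1, e2, e3]
        exact Hslot b g g' v₁ (v₂ ++ [h]) (by simp; omega)
      obtain ⟨L', hL'⟩ := ih (AbOf Gq →+ X) w' Hhead' Hslot'
      have compat : ∀ (z : ℤ) (t : tensorPair Bg Gq c) (a : AbOf Gq),
          L' (z • t) a = L' t (z • a) := by
        intro z t a
        let e : (AbOf Gq →+ X) →+ X :=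
          { toFun := fun φ => φ a, map_zero' := rfl, map_add' := fun _ _ => rfl }
        have h1 : e (L' (z • t)) = z • e (L' t) := addHom_map_intSMul (e.comp L') z t
        have h2 : L' t (z • a) = z • (L' t a) := addHom_map_intSMul (L' t) z a
        exact h1.trans h2.symm
      refine ⟨TensorProduct.liftAddHom (M := tensorPair Bg Gq c) (N := AbOf Gq) L' (fun z t a => (congrArg (fun y => L' y a) (int_smul_eq_zsmul (tensorPair Bg Gq c).isModule z t)).trans (compat z t a)), ?_⟩
      intro b v hv
      have hvne : v ≠ [] := by intro h; rw [h] at hv; simp at hv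
      have hdrop : v.dropLast.length = c := by simp [List.length_dropLast, hv]
      obtain ⟨t', ht'⟩ := hL' b v.dropLast hdrop
      refine ⟨t' ⊗ₜ[ℤ] (Additive.ofMul (Abelianization.of (v.getLast hvne))), ?_⟩
      have he : (TensorProduct.liftAddHom (M := tensorPair Bg Gq c) (N := AbOf Gq) L' (fun z t a => (congrArg (fun y => L' y a) (int_smul_eq_zsmul (tensorPair Bg Gq c).isModule z t)).trans (compat z t a)))
          (t' ⊗ₜ[ℤ] (Additive.ofMul (Abelianization.of (v.getLast hvne))))
            = L' t' (Additive.ofMul (Abelianization.of (v.getLast hvne))) := by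
        rw [TensorProduct.liftAddHom_tmul]
      exact he.trans (by rw [ht', hw'eval _ _ hdrop, List.dropLast_append_getLast])

private lemma additive_mem_closure {Q : Type*} [Group Q] (s : Set Q) {a : Q}
    (h : a ∈ Subgroup.closure s) :
    Additive.ofMul a ∈ AddSubgroup.closure (Additive.ofMul '' s) := by
  induction h using Subgroup.closure_induction with
  | mem x hx => exact AddSubgroup.subset_closure ⟨x, hx, rfl⟩
  | one => exact AddSubgroup.zero_mem _
  | mul x y _ _ hx hy => exact AddSubgroup.add_mem _ hx hy
  | inv x _ hx => exact AddSubgroup.neg_mem _ hx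

end TensorAux

/-- Let `G` be a group with free presentation `F/R` (`π : F ↠ G`, `R = ker π`), `B` a normal
subgroup of `G` and `S = π⁻¹(B)`.  Then for every `c ≥ 1` the quotient
`[S,_c F] / ([R,_c F]·[S,_{c+1} F]·∏_{i=2}^{c+1} γ_{c+1}(S,F)_i)` is abelian and there is a
surjective homomorphism onto it from `⊗^{c+1}(B, G/B)`. -/
theorem exists_epi_tensor_onto_commutator_quotient {G : Type} [Group G]
    {F : Type} [Group F] [IsFreeGroup F] (π : F →* G) (hπ : Function.Surjective π)
    (B : Subgroup G) [B.Normal] (c : ℕ) (hc : 1 ≤ c) :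
    (∀ a b : (itComm (B.comap π) ⊤ c : Subgroup F) ⧸
        (itComm π.ker ⊤ c ⊔ itComm (B.comap π) ⊤ (c+1) ⊔
          (Finset.Icc 2 (c+1)).sup (gammaMixed (B.comap π) c)).subgroupOf
            (itComm (B.comap π) ⊤ c),
      a * b = b * a) ∧
    ∃ θ : tensorPair B (G ⧸ B) c →+
        Additive ((itComm (B.comap π) ⊤ c : Subgroup F) ⧸
          (itComm π.ker ⊤ c ⊔ itComm (B.comap π) ⊤ (c+1) ⊔
            (Finset.Icc 2 (c+1)).sup (gammaMixed (B.comap π) c)).subgroupOf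
              (itComm (B.comap π) ⊤ c)),
      Function.Surjective θ := by
  classical
  set S := B.comap π with hS
  set R := π.ker with hRdef
  set Nn := itComm R ⊤ c ⊔ itComm S ⊤ (c+1) ⊔ (Finset.Icc 2 (c+1)).sup (gammaMixed S c)
    with hNdef
  haveI hSn : S.Normal := hS ▸ (inferInstance : (B.comap π).Normal)
  haveI hNn : Nn.Normal := by
    rw [hNdef, hS, hRdef]
    infer_instance
  set Hc := itComm S ⊤ c with hHc
  set K := Nn.subgroupOf Hc with hK
  -- basic inclusions
  have hc1 : itComm S ⊤ (c+1) ≤ Nn := le_trans le_sup_right le_sup_left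
  have hRle : itComm R ⊤ c ≤ Nn := le_trans le_sup_left le_sup_left
  have hgam : ∀ k, k + 1 ≤ c → itComm ⁅itComm S ⊤ k, S⁆ ⊤ (c - (k+1)) ≤ Nn := by
    intro k hk
    have hsum : k + 1 + (c - (k+1)) = c := by omega
    have hg := gammaMixed_eq S k (c - (k+1))
    rw [hsum] at hg
    rw [← hg]
    exact le_trans (Finset.le_sup (f := gammaMixed S c)
      (Finset.mem_Icc.mpr ⟨by omega, by omega⟩)) le_sup_right
  have hRS : R ≤ S := by
    intro x hx
    rw [hRdef, MonoidHom.mem_ker] at hx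
    rw [hS]
    exact Subgroup.mem_comap.mpr (by rw [hx]; exact B.one_mem)
  -- Part 1 : commutativity
  have part1 : ∀ a b : (Hc : Subgroup F) ⧸ K, a * b = b * a := by
    intro a b
    refine QuotientGroup.induction_on a (fun x => QuotientGroup.induction_on b (fun y => ?_))
    show (QuotientGroup.mk x : (Hc : Subgroup F) ⧸ K) * QuotientGroup.mk y = _
    rw [← QuotientGroup.mk_mul, ← QuotientGroup.mk_mul]
    refine QuotientGroup.eq.mpr ?_
    rw [hK]
    refine Subgroup.mem_subgroupOf.mpr ?_
    have hcoe : (((x * y)⁻¹ * (y * x) : (Hc : Subgroup F)) : F)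
        = ⁅((y : F))⁻¹, ((x : F))⁻¹⁆ := by
      push_cast
      simp only [commutatorElement_def]
      group
    rw [hcoe]
    apply hc1
    show ⁅((y : F))⁻¹, ((x : F))⁻¹⁆ ∈ ⁅itComm S ⊤ c, (⊤ : Subgroup F)⁆
    exact Subgroup.commutator_mem_commutator ((itComm S ⊤ c).inv_mem y.2) (Subgroup.mem_top _)
  refine ⟨part1, ?_⟩
  -- the quotient map and the injection into F ⧸ Nn
  letI instCG : CommGroup ((Hc : Subgroup F) ⧸ K) :=
    { (inferInstance : Group ((Hc : Subgroup F) ⧸ K)) with mul_comm := part1 }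
  have hKker : K ≤ ((QuotientGroup.mk' Nn).comp (Hc : Subgroup F).subtype).ker := by
    intro x hx
    rw [MonoidHom.mem_ker]
    exact mkN_eq_one Nn (Subgroup.mem_subgroupOf.mp hx)
  set j : ((Hc : Subgroup F) ⧸ K) →* F ⧸ Nn :=
    QuotientGroup.lift K ((QuotientGroup.mk' Nn).comp (Hc : Subgroup F).subtype) hKker with hj
  have jeval : ∀ x : (Hc : Subgroup F),
      j (QuotientGroup.mk x) = QuotientGroup.mk' Nn (x : F) := by
    intro x
    rw [hj]
    exact QuotientGroup.lift_mk' K hKker x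
  have jinj : Function.Injective j := by
    rw [injective_iff_map_eq_one]
    intro q hq
    obtain ⟨x, rfl⟩ := QuotientGroup.mk_surjective q
    rw [jeval] at hq
    have hxN : (x : F) ∈ Nn := by
      rw [← QuotientGroup.ker_mk' Nn, MonoidHom.mem_ker]
      exact hq
    exact (QuotientGroup.eq_one_iff x).mpr (Subgroup.mem_subgroupOf.mpr hxN)
  -- lifts of elements of B and G ⧸ B
  have hρs : Function.Surjective ((QuotientGroup.mk' B).comp π) := by
    intro x
    obtain ⟨g, hg⟩ := QuotientGroup.mk'_surjective B x
    obtain ⟨f, hf⟩ := hπ g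
    exact ⟨f, by rw [MonoidHom.comp_apply, hf, hg]⟩
  set ρ : F →* G ⧸ B := (QuotientGroup.mk' B).comp π with hρ
  set sG : G ⧸ B → F := Function.surjInv hρs with hsGdef
  set sB : B → F := fun b => Function.surjInv hπ (b : G) with hsBdef
  have hsB : ∀ b : B, π (sB b) = (b : G) := fun b => Function.surjInv_eq hπ _
  have hsBS : ∀ b : B, sB b ∈ S := by
    intro b
    rw [hS]
    exact Subgroup.mem_comap.mpr (by rw [hsB]; exact b.2)
  have hsG : ∀ x : G ⧸ B, ρ (sG x) = x := fun x => Function.surjInv_eq hρs x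
  have hSker : ∀ f : F, ρ f = 1 → f ∈ S := by
    intro f hf
    rw [hρ] at hf
    have : π f ∈ B := by
      rw [← QuotientGroup.ker_mk' B, MonoidHom.mem_ker]
      exact hf
    rw [hS]
    exact Subgroup.mem_comap.mpr this
  have hmemHc : ∀ (b : B) (v : List (G ⧸ B)), v.length = c →
      lcom (sB b) (v.map sG) ∈ Hc := by
    intro b v hv
    have := lcom_mem (v.map sG) (hsBS b)
    rwa [List.length_map, hv] at this
  set qElt : B → List (G ⧸ B) → ((Hc : Subgroup F) ⧸ K) := fun b v =>
    if h : v.length = c then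
      QuotientGroup.mk (⟨lcom (sB b) (v.map sG), hmemHc b v h⟩ : (Hc : Subgroup F))
    else 1 with hqElt
  have jqElt : ∀ (b : B) (v : List (G ⧸ B)) (h : v.length = c),
      j (qElt b v) = QuotientGroup.mk' Nn (lcom (sB b) (v.map sG)) := by
    intro b v h
    rw [hqElt]
    simp only [dif_pos h]
    exact jeval _
  -- head additivity
  have headSplit : ∀ (b b' : B) (l : List F), l.length = c →
      QuotientGroup.mk' Nn (lcom (sB (b * b')) l)
        = QuotientGroup.mk' Nn (lcom (sB b) l) * QuotientGroup.mk' Nn (lcom (sB b') l) := by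
    intro b b' l hl
    have hkey := (key S Nn c hc1 l 0 (by omega)).1
    have hrR : sB (b * b') * (sB b * sB b')⁻¹ ∈ R := by
      rw [hRdef, MonoidHom.mem_ker]
      rw [map_mul, map_inv, map_mul, hsB, hsB, hsB]
      push_cast
      group
    have hsplit : sB (b * b') = (sB (b * b') * (sB b * sB b')⁻¹) * (sB b * sB b') := by group
    rw [hsplit, hkey _ _ (hRS hrR) (S.mul_mem (hsBS b) (hsBS b')),
      hkey _ _ (hsBS b) (hsBS b')]
    have h1 : QuotientGroup.mk' Nn (lcom (sB (b * b') * (sB b * sB b')⁻¹) l) = 1 := by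
      apply mkN_eq_one
      apply hRle
      have := lcom_mem l hrR
      rwa [hl] at this
    rw [h1, one_mul]
  have Hhead : ∀ (b b' : B) (v : List (G ⧸ B)), v.length = c →
      Additive.ofMul (qElt (b * b') v)
        = Additive.ofMul (qElt b v) + Additive.ofMul (qElt b' v) := by
    intro b b' v hv
    have hq : qElt (b * b') v = qElt b v * qElt b' v := by
      apply jinj
      rw [map_mul, jqElt _ _ hv, jqElt _ _ hv, jqElt _ _ hv]
      exact headSplit b b' (v.map sG) (by rw [List.length_map, hv])
    rw [hq]
    rfl
  -- slot additivity
  have Hslot : ∀ (b : B) (g g' : G ⧸ B) (v₁ v₂ : List (G ⧸ B)),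
      v₁.length + v₂.length + 1 = c →
      Additive.ofMul (qElt b (v₁ ++ (g * g') :: v₂))
        = Additive.ofMul (qElt b (v₁ ++ g :: v₂)) + Additive.ofMul (qElt b (v₁ ++ g' :: v₂)) := by
    intro b g g' v₁ v₂ hlen
    have hu : lcom (sB b) (v₁.map sG) ∈ itComm S ⊤ v₁.length := by
      have := lcom_mem (v₁.map sG) (hsBS b)
      rwa [List.length_map] at this
    have hk2 := key2 S Nn c hc1 hgam (v₂.map sG) v₁.length
      (by rw [List.length_map]; omega) hu
    have htS : sG (g * g') * (sG g * sG g')⁻¹ ∈ S := by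
      apply hSker
      rw [map_mul, map_inv, map_mul, hsG, hsG, hsG]
      group
    have hsplit : sG (g * g') = (sG (g * g') * (sG g * sG g')⁻¹) * (sG g * sG g') := by group
    have e0 : ∀ x : G ⧸ B, (v₁ ++ x :: v₂).map sG = (v₁.map sG) ++ (sG x) :: (v₂.map sG) := by
      intro x; simp
    have hφ : QuotientGroup.mk' Nn (lcom (sB b) ((v₁ ++ (g * g') :: v₂).map sG))
        = QuotientGroup.mk' Nn (lcom (sB b) ((v₁ ++ g :: v₂).map sG))
          * QuotientGroup.mk' Nn (lcom (sB b) ((v₁ ++ g' :: v₂).map sG)) := by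
      rw [e0, e0, e0, lcom_append, lcom_append, lcom_append]
      rw [hsplit, hk2.2 _ htS _, hk2.1 (sG g) (sG g')]
    have l1 : (v₁ ++ (g * g') :: v₂).length = c := by simp; omega
    have l2 : (v₁ ++ g :: v₂).length = c := by simp; omega
    have l3 : (v₁ ++ g' :: v₂).length = c := by simp; omega
    have hq : qElt b (v₁ ++ (g * g') :: v₂)
        = qElt b (v₁ ++ g :: v₂) * qElt b (v₁ ++ g' :: v₂) := by
      apply jinj
      rw [map_mul, jqElt _ _ l1, jqElt _ _ l2, jqElt _ _ l3]
      exact hφ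
    rw [hq]
    rfl
  -- generation
  set genQ : Set ((Hc : Subgroup F) ⧸ K) := {q | ∃ b v, v.length = c ∧ qElt b v = q}
    with hgenQdef
  have hforall : ∀ l : List F,
      List.Forall₂ (fun f f' => f' * f⁻¹ ∈ S) l ((l.map ρ).map sG) := by
    intro l
    induction l with
    | nil => exact List.Forall₂.nil
    | cons f l ihl =>
        simp only [List.map_cons]
        refine List.Forall₂.cons ?_ ihl
        apply hSker
        rw [map_mul, map_inv, hsG]
        group
  have CL : ∀ k, ∀ z, z ∈ itComm S ⊤ k → ∀ l : List F, k + l.length = c →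
      QuotientGroup.mk' Nn (lcom z l) ∈ Subgroup.map j (Subgroup.closure genQ) := by
    intro k
    induction k with
    | zero =>
        intro z hz l hl
        have hzS : z ∈ S := hz
        have hπz : π z ∈ B := Subgroup.mem_comap.mp (hS ▸ hzS)
        have hvlen : (l.map ρ).length = c := by rw [List.length_map]; omega
        refine Subgroup.mem_map.mpr ⟨qElt ⟨π z, hπz⟩ (l.map ρ),
          Subgroup.subset_closure ⟨⟨π z, hπz⟩, l.map ρ, hvlen, rfl⟩, ?_⟩
        rw [jqElt _ _ hvlen]
        have hr : sB ⟨π z, hπz⟩ * z⁻¹ ∈ R := by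
          rw [hRdef, MonoidHom.mem_ker, map_mul, map_inv, hsB]
          group
        have hsp : sB ⟨π z, hπz⟩ = (sB ⟨π z, hπz⟩ * z⁻¹) * z := by group
        have hkey := (key S Nn c hc1 ((l.map ρ).map sG) 0
          (by rw [List.length_map, List.length_map]; omega)).1
        rw [hsp, hkey _ _ (hRS hr) hzS]
        have h1 : QuotientGroup.mk' Nn (lcom (sB ⟨π z, hπz⟩ * z⁻¹) ((l.map ρ).map sG)) = 1 := by
          apply mkN_eq_one
          apply hRle
          have := lcom_mem ((l.map ρ).map sG) hr
          rwa [List.length_map, List.length_map, show l.length = c by omega] at this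
        rw [h1, one_mul]
        exact key_subst S Nn c hc1 hgam (hforall l) 0 (by omega) hzS
    | succ k ihk =>
        intro z hz l hl
        have hz' : z ∈ Subgroup.closure
            {x | ∃ g₁ ∈ itComm S ⊤ k, ∃ g₂ ∈ (⊤ : Subgroup F), ⁅g₁, g₂⁆ = x} := by
          rw [← Subgroup.commutator_def]
          exact hz
        have hback : ∀ x : F, x ∈ Subgroup.closure
            {x | ∃ g₁ ∈ itComm S ⊤ k, ∃ g₂ ∈ (⊤ : Subgroup F), ⁅g₁, g₂⁆ = x} →
            x ∈ itComm S ⊤ (k + 1) := by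
          intro x hx
          rw [show itComm S ⊤ (k+1) = ⁅itComm S ⊤ k, (⊤ : Subgroup F)⁆ from rfl,
            Subgroup.commutator_def]
          exact hx
        refine Subgroup.closure_induction
          (p := fun x _ => ∀ l' : List F, (k+1) + l'.length = c →
            QuotientGroup.mk' Nn (lcom x l') ∈ Subgroup.map j (Subgroup.closure genQ))
          ?_ ?_ ?_ ?_ hz' l hl
        · rintro x ⟨g₁, hg₁, g₂, -, rfl⟩ l' hl'
          show QuotientGroup.mk' Nn (lcom g₁ (g₂ :: l')) ∈ _
          exact ihk g₁ hg₁ (g₂ :: l') (by simp at hl' ⊢; omega)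
        · intro l' _
          rw [lcom_one, map_one]
          exact Subgroup.one_mem _
        · intro x y hx hy ihx ihy l' hl'
          rw [(key S Nn c hc1 l' (k+1) (by omega)).1 x y (hback x hx) (hback y hy)]
          exact Subgroup.mul_mem _ (ihx l' hl') (ihy l' hl')
        · intro x hx ihx l' hl'
          have hx' : x ∈ itComm S ⊤ (k+1) := hback x hx
          have h1 : QuotientGroup.mk' Nn (lcom (x⁻¹ * x) l')
              = QuotientGroup.mk' Nn (lcom x⁻¹ l') * QuotientGroup.mk' Nn (lcom x l') :=
            (key S Nn c hc1 l' (k+1) (by omega)).1 _ _ ((itComm S ⊤ (k+1)).inv_mem hx') hx'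
          rw [inv_mul_cancel, lcom_one, map_one] at h1
          have h2 : QuotientGroup.mk' Nn (lcom x⁻¹ l')
              = (QuotientGroup.mk' Nn (lcom x l'))⁻¹ :=
            eq_inv_of_mul_eq_one_left h1.symm
          rw [h2]
          exact Subgroup.inv_mem _ (ihx l' hl')
  have hgenQ : ∀ q : ((Hc : Subgroup F) ⧸ K), q ∈ Subgroup.closure genQ := by
    intro q
    obtain ⟨x, rfl⟩ := QuotientGroup.mk_surjective q
    have hx : (x : F) ∈ itComm S ⊤ c := x.2
    have hmem := CL c (↑x) hx [] (by simp)
    rw [show lcom ((x : F)) [] = (x : F) from rfl] at hmem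
    obtain ⟨y, hy, hjy⟩ := Subgroup.mem_map.mp hmem
    have heq : j y = j (QuotientGroup.mk x) := by rw [hjy, jeval]
    rw [← jinj heq]
    exact hy
  -- conclusion
  obtain ⟨L, hL⟩ := tensor_surj_aux B (G ⧸ B) c (Additive ((Hc : Subgroup F) ⧸ K))
    (fun b v => Additive.ofMul (qElt b v)) Hhead Hslot
  refine ⟨L, ?_⟩
  intro x
  have himg : Additive.ofMul '' genQ
      = {y | ∃ b v, v.length = c ∧ Additive.ofMul (qElt b v) = y} := by
    ext y
    constructor
    · rintro ⟨q, ⟨b, v, hv, rfl⟩, rfl⟩; exact ⟨b, v, hv, rfl⟩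
    · rintro ⟨b, v, hv, rfl⟩; exact ⟨qElt b v, ⟨b, v, hv, rfl⟩, rfl⟩
  have h1 := additive_mem_closure genQ (hgenQ (Additive.toMul x))
  rw [himg] at h1
  have hsub : {y | ∃ b v, v.length = c ∧ Additive.ofMul (qElt b v) = y}
      ⊆ (L.range : Set (Additive ((Hc : Subgroup F) ⧸ K))) := by
    rintro y ⟨b, v, hv, rfl⟩
    obtain ⟨t, ht⟩ := hL b v hv
    exact ⟨t, ht⟩
  have h2 := (AddSubgroup.closure_le L.range).mpr hsub h1
  obtain ⟨t, ht⟩ := AddMonoidHom.mem_range.mp h2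
  exact ⟨t, ht⟩
end
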